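/- With D and V_q(ω,b,a) = ⨁_{i∈ℤ}K v_i as above (q not a root of unity, b ∉ {q^i}, a ∈ K, char K = 0), the D-module V_q(ω,b,a) is simple: every nonzero D-submodule equals V. -/

import Mathlib

open Finsupp

/-- The `D`-module `V_q(ω,b,a)` is simple: every nonzero `D`-submodule is the whole module. -/
theorem stmt14 (K : Type*) [Field K] [IsAlgClosed K] [CharZero K] (q : K) (hq0 : q ≠ 0)
    (hq : ∀ n : ℕ, 0 < n → q ^ n ≠ 1)
    (b : K) (hb0 : b ≠ 0) (hb : ∀ i : ℤ, b ≠ q ^ i) (a : K)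
    (Xo Yo Y1 T S : Module.End K (ℤ →₀ K))
    (hX : ∀ i : ℤ, Xo (single i 1) = (q ^ (i + 1) * b - 1) • single (i + 1) (1 : K))
    (hY1 : ∀ i : ℤ, Y1 (single i 1) = single (i - 1) (1 : K))
    (hY : ∀ i : ℤ, Yo (single i 1) = ((a + i - 1) / (q ^ i * b - 1)) • single (i - 1) (1 : K))
    (hT : ∀ i : ℤ, T (single i 1) = (a + i) • single i (1 : K))
    (hS : ∀ i : ℤ, S (single i 1) = (q ^ i * b) • single i (1 : K)) :
    ∀ p : Submodule K (ℤ →₀ K),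
      (∀ v ∈ p, Xo v ∈ p) → (∀ v ∈ p, Yo v ∈ p) → (∀ v ∈ p, Y1 v ∈ p) →
      (∀ v ∈ p, T v ∈ p) → (∀ v ∈ p, S v ∈ p) →
      p ≠ ⊥ → p = ⊤ := by
  intro p hXp _hYp hY1p _hTp hSp hpbot
  -- q^n ≠ 1 for nonzero integers n
  have hzpow : ∀ n : ℤ, n ≠ 0 → q ^ n ≠ 1 := by
    intro n hn h
    rcases lt_trichotomy n 0 with h1 | h1 | h1
    · have h2 : q ^ (-n) = 1 := by rw [zpow_neg, h, inv_one]
      lift -n to ℕ using (by omega) with m hm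
      rw [zpow_natCast] at h2
      exact hq m (by omega) h2
    · exact hn h1
    · lift n to ℕ using (by omega) with m hm
      rw [zpow_natCast] at h
      exact hq m (by exact_mod_cast h1) h
  -- distinct eigenvalues of S
  have key : ∀ i j : ℤ, i ≠ j → q ^ i * b ≠ q ^ j * b := by
    intro i j hij h
    have h2 : q ^ i = q ^ j := mul_right_cancel₀ hb0 h
    have h3 : q ^ (i - j) = 1 := by
      rw [zpow_sub₀ hq0, h2, div_self (zpow_ne_zero _ hq0)]
    exact hzpow (i - j) (by omega) h3
  -- q^i b - 1 ≠ 0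
  have hnz : ∀ i : ℤ, q ^ i * b - 1 ≠ 0 := by
    intro i h
    apply hb (-i)
    have h1 : q ^ i * b = 1 := sub_eq_zero.mp h
    rw [zpow_neg]
    exact eq_inv_of_mul_eq_one_right h1
  -- coefficients of S v
  have hScoeff : ∀ v : ℤ →₀ K, ∀ j : ℤ, (S v) j = q ^ j * b * v j := by
    intro v
    induction v using Finsupp.induction_linear with
    | zero => intro j; simp
    | add f g ihf ihg => intro j; simp [ihf j, ihg j, mul_add]
    | single i c =>
      intro j
      have h1 : (single i c : ℤ →₀ K) = c • single i (1 : K) := by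
        rw [smul_single, smul_eq_mul, mul_one]
      rw [h1, map_smul, hS i]
      simp only [Finsupp.smul_apply, Finsupp.single_apply, smul_eq_mul]
      split_ifs with h
      · subst h; ring
      · ring
  -- extraction of a basis vector
  have hextract : ∀ n : ℕ, ∀ v : ℤ →₀ K, v.support.card = n → v ∈ p → v ≠ 0 →
      ∃ i : ℤ, single i (1 : K) ∈ p := by
    intro n
    induction n using Nat.strong_induction_on with
    | _ n ih =>
      intro v hcard hvp hv0
      obtain ⟨i, hi⟩ : ∃ i, i ∈ v.support := by
        rcases Finset.eq_empty_or_nonempty v.support with h | h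
        · exact absurd (Finsupp.support_eq_empty.mp h) hv0
        · exact h
      by_cases hone : v.support.card = 1
      · refine ⟨i, ?_⟩
        obtain ⟨j, hj0, hjv⟩ := Finsupp.card_support_eq_one.mp hone
        have hij : i = j := by
          by_contra hne
          have hmem := Finsupp.mem_support_iff.mp hi
          rw [hjv, Finsupp.single_eq_of_ne' (fun h => hne h.symm)] at hmem
          exact hmem rfl
        subst hij
        have h2 : (v i)⁻¹ • v ∈ p := p.smul_mem _ hvp
        have h3 : (v i)⁻¹ • v = single i (1 : K) := by
          rw [hjv, Finsupp.single_eq_same, smul_single, smul_eq_mul,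
            inv_mul_cancel₀ hj0]
        rwa [h3] at h2
      · have hn2 : 2 ≤ n := by
          have h1 : v.support.Nonempty := ⟨i, hi⟩
          have := Finset.card_pos.mpr h1
          omega
        set w := S v - (q ^ i * b) • v with hw
        have hwp : w ∈ p := p.sub_mem (hSp v hvp) (p.smul_mem _ hvp)
        have hwcoeff : ∀ j, w j = (q ^ j * b - q ^ i * b) * v j := by
          intro j
          simp [hw, hScoeff v j]
          ring
        have hwsupp : w.support ⊆ v.support.erase i := by
          intro j hj
          rw [Finsupp.mem_support_iff, hwcoeff j] at hj
          rw [Finset.mem_erase, Finsupp.mem_support_iff]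
          constructor
          · intro hji; apply hj; rw [hji]; ring
          · intro hvj; apply hj; rw [hvj, mul_zero]
        obtain ⟨j, hjsupp, hji⟩ := Finset.exists_mem_ne (by omega : 1 < v.support.card) i
        have hw0 : w ≠ 0 := by
          intro h
          have : w j = 0 := by rw [h]; rfl
          rw [hwcoeff j] at this
          rcases mul_eq_zero.mp this with h1 | h1
          · exact key j i hji (sub_eq_zero.mp h1)
          · exact (Finsupp.mem_support_iff.mp hjsupp) h1
        have hwlt : w.support.card < n := by
          have h1 := Finset.card_le_card hwsupp
          have h2 := Finset.card_erase_of_mem hi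
          omega
        exact ih w.support.card hwlt w rfl hwp hw0
  -- get a starting basis vector
  obtain ⟨v, hvp, hv0⟩ := Submodule.exists_mem_ne_zero_of_ne_bot hpbot
  obtain ⟨i, hi⟩ := hextract v.support.card v rfl hvp hv0
  -- generate upward and downward
  have hup : ∀ j : ℤ, single j (1 : K) ∈ p → single (j + 1) (1 : K) ∈ p := by
    intro j hj
    have h1 := hXp _ hj
    rw [hX j] at h1
    have h2 := p.smul_mem (q ^ (j + 1) * b - 1)⁻¹ h1
    rw [smul_smul, inv_mul_cancel₀ (hnz (j + 1)), one_smul] at h2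
    exact h2
  have hdown : ∀ j : ℤ, single j (1 : K) ∈ p → single (j - 1) (1 : K) ∈ p := by
    intro j hj
    have h1 := hY1p _ hj
    rwa [hY1 j] at h1
  have hplus : ∀ n : ℕ, single (i + (n : ℤ)) (1 : K) ∈ p := by
    intro n
    induction n with
    | zero => simpa using hi
    | succ m ihm =>
      have h1 := hup _ ihm
      have h2 : i + ((m : ℤ) + 1) = i + (m : ℤ) + 1 := by ring
      rw [show ((m + 1 : ℕ) : ℤ) = (m : ℤ) + 1 by push_cast; ring, h2]
      exact h1
  have hminus : ∀ n : ℕ, single (i - (n : ℤ)) (1 : K) ∈ p := by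
    intro n
    induction n with
    | zero => simpa using hi
    | succ m ihm =>
      have h1 := hdown _ ihm
      rw [show i - ((m + 1 : ℕ) : ℤ) = i - (m : ℤ) - 1 by push_cast; ring]
      exact h1
  have hall : ∀ j : ℤ, single j (1 : K) ∈ p := by
    intro j
    rcases le_or_gt i j with h | h
    · have := hplus (j - i).toNat
      rwa [show i + ((j - i).toNat : ℤ) = j by omega] at this
    · have := hminus (i - j).toNat
      rwa [show i - ((i - j).toNat : ℤ) = j by omega] at this
  -- conclude
  rw [eq_top_iff]
  intro v _
  rw [← Finsupp.sum_single v]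
  apply Submodule.sum_mem
  intro j _
  have h1 : single j (v j) = (v j) • single j (1 : K) := by
    rw [smul_single, smul_eq_mul, mul_one]
  rw [h1]
  exact p.smul_mem _ (hall j)
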